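/- arXiv:0807.3816 — 2 statements merged into one kernel-verified Lean document; each statement's English description precedes it below -/
import Mathlib

section
/- Let (ε_k)_{k≥0} be i.i.d. symmetric Bernoulli random variables and let M be the skip free process defined by M_0 = 0 and M_n = Σ_{j=1}^n ε_{⌊log₂ j⌋} for n ≥ 1. Then 0 and 1 are the only nonnegative integer levels at which the reflection principle holds for M: for a nonnegative integer a, Θ^a(M) ≐ M if and only if a ∈ {0, 1}. -/
open MeasureTheory ProbabilityTheory Filter Finset
open scoped ENNReal NNReal

noncomputable section

/-- The quadratic variation `[s]_n` of a discrete path `s`. -/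
def qv (s : ℕ → ℤ) (n : ℕ) : ℕ :=
  ∑ k ∈ Finset.range n, (s (k + 1) - s k).natAbs ^ 2

/-- Reflection of a discrete path at level `a`:
`Θ^a(s)_n = ∑_{k=1}^n (1_{k ≤ T_a(s)} - 1_{k > T_a(s)}) (s_k - s_{k-1})`,
where `k ≤ T_a(s)` iff `s_j ≠ a` for every `j < k`. -/
def reflect (a : ℤ) (s : ℕ → ℤ) : ℕ → ℤ := fun n =>
  ∑ k ∈ Finset.range n, if ∀ j ≤ k, s j ≠ a then s (k + 1) - s k else s k - s (k + 1)

/-- A (deterministic) skip free path: starts at `0` and has increments in `{-1, 0, 1}`. -/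
def SkipFreePath (s : ℕ → ℤ) : Prop :=
  s 0 = 0 ∧ ∀ n, s (n + 1) - s n = 1 ∨ s (n + 1) - s n = 0 ∨ s (n + 1) - s n = -1

/-- The uniform law on `{-1, +1} ⊆ ℤ`. -/
def bern : Measure ℤ :=
  (2 : ℝ≥0∞)⁻¹ • Measure.dirac (1 : ℤ) + (2 : ℝ≥0∞)⁻¹ • Measure.dirac (-1 : ℤ)

/-- `S` is a symmetric Bernoulli random walk: `S_0 = 0` a.s. and the increments are
i.i.d. uniform on `{-1, +1}`. -/
def IsBernoulliRW {Ω : Type*} [MeasurableSpace Ω] (P : Measure Ω) (S : ℕ → Ω → ℤ) : Prop :=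
  (∀ᵐ ω ∂P, S 0 ω = 0) ∧
    iIndepFun (fun n ω => S (n + 1) ω - S n ω) P ∧
    ∀ n, Measure.map (fun ω => S (n + 1) ω - S n ω) P = bern

/-- `M` is a discrete Ocone local martingale: it is equal in law to a symmetric Bernoulli
random walk time changed by an independent nondecreasing `ℕ`-valued process with
increments in `{0, 1}`. -/
def IsDiscreteOcone {Ω : Type*} [MeasurableSpace Ω] (P : Measure Ω) (M : ℕ → Ω → ℤ) : Prop :=
  ∃ (Ω' : Type) (_ : MeasurableSpace Ω') (P' : Measure Ω') (S : ℕ → Ω' → ℤ) (A : ℕ → Ω' → ℕ),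
    IsProbabilityMeasure P' ∧ IsBernoulliRW P' S ∧
    (∀ ω, A 0 ω = 0) ∧ (∀ ω n, A (n + 1) ω = A n ω ∨ A (n + 1) ω = A n ω + 1) ∧
    IndepFun (fun ω => (S · ω)) (fun ω => (A · ω)) P' ∧
    Measure.map (fun ω => (fun n => M n ω)) P
      = Measure.map (fun ω => (fun n => S (A n ω) ω)) P'

/-- The successive times at which the quadratic variation of `s` increases:
`τ_0 = 0` and `τ_{n+1} = inf {k > τ_n : [s]_k = n + 1}`, with `inf ∅ = τ_n`. -/
def tauP (s : ℕ → ℤ) : ℕ → ℕ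
  | 0 => 0
  | n + 1 => max (tauP s n) (sInf {k | tauP s n < k ∧ qv s k = n + 1})

/-- The time-changed path `S^s = (s_{τ_n})_n`. -/
def SM (s : ℕ → ℤ) : ℕ → ℤ := fun n => s (tauP s n)

namespace CE2

def F (e : ℕ → ℤ) : ℕ → ℤ := fun n => ∑ j ∈ Finset.Icc 1 n, e (Nat.log 2 j)
def G (e : ℕ → ℤ) : ℕ → ℤ := fun j => if ∃ i < j, e i = 1 then -e j else e j
def Cyl (n : ℕ) (v : ℕ → ℤ) : Set (ℕ → ℤ) := {e | ∀ i < n, e i = v i}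
def cylSet : Set (Set (ℕ → ℤ)) := {S | ∃ n v, S = Cyl n v}

lemma bern_singleton (x : ℤ) :
    bern {x} = if x = 1 ∨ x = -1 then (2 : ℝ≥0∞)⁻¹ else 0 := by
  simp only [bern, Measure.add_apply, Measure.smul_apply, smul_eq_mul,
    Measure.dirac_apply' _ (measurableSet_singleton x)]
  by_cases h1 : x = 1
  · subst h1; norm_num [Set.indicator]
  · by_cases h2 : x = -1
    · subst h2; norm_num [Set.indicator]
    · have n1 : ¬ (1 : ℤ) ∈ ({x} : Set ℤ) := by simp [Set.mem_singleton_iff]; omega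
      have n2 : ¬ (-1 : ℤ) ∈ ({x} : Set ℤ) := by simp [Set.mem_singleton_iff]; omega
      rw [Set.indicator_of_notMem n1, Set.indicator_of_notMem n2, if_neg (by tauto)]
      simp

lemma bern_neg (x : ℤ) : bern {-x} = bern {x} := by
  rw [bern_singleton, bern_singleton]
  congr 1
  simp only [eq_iff_iff]
  omega

lemma bern_pm_compl : bern ({1, -1}ᶜ : Set ℤ) = 0 := by
  have h1 : (1:ℤ) ∉ ({1, -1}ᶜ : Set ℤ) := by simp
  have h2 : (-1:ℤ) ∉ ({1, -1}ᶜ : Set ℤ) := by simp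
  have hms : MeasurableSet ({1, -1}ᶜ : Set ℤ) := (by trivial : MeasurableSet ({1,-1} : Set ℤ)).compl
  simp only [bern, Measure.add_apply, Measure.smul_apply, smul_eq_mul,
    Measure.dirac_apply' _ hms]
  rw [Set.indicator_of_notMem h1, Set.indicator_of_notMem h2]
  simp

lemma measurable_finite_dep (f : (ℕ → ℤ) → ℤ) (m : ℕ)
    (h : ∀ e e' : ℕ → ℤ, (∀ i < m, e i = e' i) → f e = f e') : Measurable f := by
  have heq : f = (fun v : Fin m → ℤ => f (fun i => if h : i < m then v ⟨i, h⟩ else 0)) ∘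
      (fun e (i : Fin m) => e i) := by
    funext e
    exact (h _ e (fun i hi => by simp [hi])).symm
  rw [heq]
  exact (measurable_of_countable _).comp (measurable_pi_lambda _ fun i => measurable_pi_apply _)

lemma measurable_F : Measurable F := by
  apply measurable_pi_lambda
  intro n
  apply measurable_finite_dep _ (n + 1)
  intro e e' he
  simp only [F]
  refine Finset.sum_congr rfl fun j hj => ?_
  simp only [Finset.mem_Icc] at hj
  exact he _ (lt_of_le_of_lt (le_trans (Nat.log_le_self 2 j) hj.2) (Nat.lt_succ_self n))

lemma measurable_G : Measurable G := by
  apply measurable_pi_lambda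
  intro n
  apply measurable_finite_dep _ (n + 1)
  intro e e' he
  simp only [G]
  have h1 : (∃ i < n, e i = 1) ↔ (∃ i < n, e' i = 1) := by
    constructor <;> rintro ⟨i, hi, h⟩ <;> exact ⟨i, hi, by rw [← he i (by omega)] at *; omega⟩
  rw [he n (by omega)]
  by_cases h : ∃ i < n, e i = 1
  · rw [if_pos h, if_pos (h1.mp h)]
  · rw [if_neg h, if_neg (fun h' => h (h1.mpr h'))]

lemma measurable_reflect (a : ℤ) : Measurable (reflect a) := by
  apply measurable_pi_lambda
  intro n
  apply measurable_finite_dep _ (n + 2)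
  intro e e' he
  simp only [reflect]
  refine Finset.sum_congr rfl fun k hk => ?_
  simp only [Finset.mem_range] at hk
  have hc : (∀ j ≤ k, e j ≠ a) ↔ (∀ j ≤ k, e' j ≠ a) := by
    constructor <;> intro h j hj <;> [rw [← he j (by omega)]; rw [he j (by omega)]] <;> exact h j hj
  rw [he k (by omega), he (k+1) (by omega)]
  by_cases h : ∀ j ≤ k, e j ≠ a
  · rw [if_pos h, if_pos (hc.mp h)]
  · rw [if_neg h, if_neg (fun h' => h (hc.mpr h'))]

lemma Cyl_eq (n : ℕ) (v : ℕ → ℤ) :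
    Cyl n v = ⋂ i ∈ Finset.range n, (fun e : ℕ → ℤ => e i) ⁻¹' {v i} := by
  ext e; simp [Cyl, Set.mem_iInter]

lemma measurableSet_Cyl (n : ℕ) (v : ℕ → ℤ) : MeasurableSet (Cyl n v) := by
  rw [Cyl_eq]
  exact MeasurableSet.biInter (Finset.range n).countable_toSet
    fun i _ => (measurable_pi_apply i) (measurableSet_singleton _)

lemma isPiSystem_cylSet : IsPiSystem cylSet := by
  rintro _ ⟨n, v, rfl⟩ _ ⟨m, w, rfl⟩ ⟨e, he⟩
  refine ⟨max n m, e, ?_⟩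
  obtain ⟨he1, he2⟩ := he
  ext e'
  constructor
  · rintro ⟨h1, h2⟩ i hi
    rcases Nat.lt_or_ge i n with h | h
    · rw [h1 i h, ← he1 i h]
    · have : i < m := by omega
      rw [h2 i this, ← he2 i this]
  · intro h
    constructor
    · intro i hi; rw [h i (by omega), he1 i hi]
    · intro i hi; rw [h i (by omega), he2 i hi]

lemma generateFrom_cylSet :
    (MeasurableSpace.pi : MeasurableSpace (ℕ → ℤ)) = MeasurableSpace.generateFrom cylSet := by
  apply le_antisymm
  · rw [MeasurableSpace.pi]
    refine iSup_le fun i => ?_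
    rw [MeasurableSpace.comap_le_iff_le_map]
    intro A _
    have hA : (fun e : ℕ → ℤ => e i) ⁻¹' A = ⋃ a ∈ A, (fun e : ℕ → ℤ => e i) ⁻¹' {a} := by
      ext e; simp
    rw [MeasurableSpace.map_def, hA]
    refine MeasurableSet.biUnion A.to_countable fun a _ => ?_
    have : (fun e : ℕ → ℤ => e i) ⁻¹' {a} =
        ⋃ w : Fin i → ℤ, Cyl (i + 1) (fun j => if h : j < i then w ⟨j, h⟩ else a) := by
      ext e
      simp only [Set.mem_preimage, Set.mem_singleton_iff, Set.mem_iUnion]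
      constructor
      · intro h
        refine ⟨fun j => e j, fun j hj => ?_⟩
        rcases Nat.lt_or_ge j i with h' | h'
        · simp [h']
        · have : j = i := by omega
          subst this; simp [h]
      · rintro ⟨w, hw⟩
        have := hw i (by omega)
        simpa using this
    rw [this]
    exact MeasurableSet.iUnion fun w =>
      MeasurableSpace.measurableSet_generateFrom ⟨_, _, rfl⟩
  · rw [MeasurableSpace.generateFrom_le_iff]
    rintro _ ⟨n, v, rfl⟩
    exact measurableSet_Cyl n v

lemma ext_of_cyl (μ ν : Measure (ℕ → ℤ)) [IsProbabilityMeasure μ] [IsProbabilityMeasure ν]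
    (h : ∀ n v, μ (Cyl n v) = ν (Cyl n v)) : μ = ν := by
  refine ext_of_generate_finite cylSet generateFrom_cylSet isPiSystem_cylSet ?_ (by simp)
  rintro _ ⟨n, v, rfl⟩
  exact h n v

section Law
variable {Ω : Type*} [MeasurableSpace Ω] (P : Measure Ω) (ε : ℕ → Ω → ℤ)

lemma meas_epspoint (hmeas : ∀ k, Measurable (ε k)) (hlaw : ∀ k, Measure.map (ε k) P = bern)
    (k : ℕ) (x : ℤ) : P (ε k ⁻¹' {x}) = bern {x} := by
  rw [← hlaw k, Measure.map_apply (hmeas k) (measurableSet_singleton x)]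

lemma measurable_epsvec (hmeas : ∀ k, Measurable (ε k)) : Measurable (fun ω => (ε · ω)) :=
  measurable_pi_lambda _ fun k => hmeas k

lemma fdd (hmeas : ∀ k, Measurable (ε k))
    (hindep : iIndepFun ε P)
    (hlaw : ∀ k, Measure.map (ε k) P = bern) (n : ℕ) (v : ℕ → ℤ) :
    Measure.map (fun ω => (ε · ω)) P (Cyl n v) = ∏ i ∈ Finset.range n, bern {v i} := by
  rw [Measure.map_apply (measurable_epsvec ε hmeas) (measurableSet_Cyl n v)]
  have hpre : (fun ω => (ε · ω)) ⁻¹' Cyl n v = ⋂ i ∈ Finset.range n, ε i ⁻¹' {v i} := by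
    ext ω; simp [Cyl]
  rw [hpre, hindep.measure_inter_preimage_eq_mul (sets := fun i => {v i})
    (Finset.range n) (fun i _ => measurableSet_singleton _)]
  exact Finset.prod_congr rfl fun i _ => meas_epspoint P ε hmeas hlaw i (v i)

end Law


lemma F_zero (e : ℕ → ℤ) : F e 0 = 0 := by simp [F]

lemma F_succ (e : ℕ → ℤ) (n : ℕ) : F e (n + 1) = F e n + e (Nat.log 2 (n + 1)) := by
  rw [F, Finset.sum_Icc_succ_top (by omega)]
  rfl

lemma F_const (e : ℕ → ℤ) (n : ℕ) (c : ℤ) (h : ∀ j, 1 ≤ j → j ≤ n → e (Nat.log 2 j) = c) :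
    F e n = n * c := by
  rw [F]
  rw [Finset.sum_congr rfl (fun j hj => h j (Finset.mem_Icc.mp hj).1 (Finset.mem_Icc.mp hj).2)]
  simp [Nat.card_Icc]

lemma F_block (e : ℕ → ℤ) (m : ℕ) :
    ∀ i ≤ 2 ^ m, F e (2 ^ m - 1 + i) = F e (2 ^ m - 1) + i * e m := by
  intro i
  induction i with
  | zero => simp
  | succ i ih =>
    intro hi
    have h2 : (1:ℕ) ≤ 2 ^ m := Nat.one_le_two_pow
    have : 2 ^ m - 1 + (i + 1) = (2 ^ m - 1 + i) + 1 := by omega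
    rw [this, F_succ, ih (by omega)]
    have hlog : Nat.log 2 (2 ^ m - 1 + i + 1) = m := by
      apply Nat.log_eq_of_pow_le_of_lt_pow <;> omega
    rw [hlog]
    push_cast
    ring

lemma F_pow_sub_one (e : ℕ → ℤ) (m : ℕ) :
    F e (2 ^ m - 1) = ∑ i ∈ Finset.range m, (2:ℤ) ^ i * e i := by
  induction m with
  | zero => simp [F_zero]
  | succ m ih =>
    have h2 : (1:ℕ) ≤ 2 ^ m := Nat.one_le_two_pow
    have : 2 ^ (m + 1) - 1 = 2 ^ m - 1 + 2 ^ m := by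
      have := Nat.pow_succ 2 m; omega
    rw [this, F_block e m (2 ^ m) le_rfl, ih, Finset.sum_range_succ]
    push_cast
    ring

lemma geom_two (K : ℕ) : ∑ i ∈ Finset.range K, (2:ℤ) ^ i = 2 ^ K - 1 := by
  induction K with
  | zero => simp
  | succ K ih => rw [Finset.sum_range_succ, ih]; ring

/-- Key structural lemma: for a `±1`-valued sequence, `F e` hits `1` by time `k`
iff some `e i = 1` with `i < log₂ (k+1)`. -/
lemma hits_one_iff (e : ℕ → ℤ) (he : ∀ i, e i = 1 ∨ e i = -1) (k : ℕ) :
    (∃ j ≤ k, F e j = 1) ↔ (∃ i < Nat.log 2 (k + 1), e i = 1) := by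
  set L := Nat.log 2 (k + 1) with hL
  constructor
  · -- contrapositive
    intro hj
    by_contra hne
    push_neg at hne
    have hneg : ∀ i < L, e i = -1 := fun i hi => (he i).resolve_left (hne i hi)
    obtain ⟨j, hjk, hFj⟩ := hj
    have hk2 : k + 1 < 2 ^ (L + 1) := Nat.lt_pow_succ_log_self (by norm_num) (k+1)
    -- show F e j ≤ 0
    have : F e j ≤ 0 := by
      rcases Nat.lt_or_ge j (2 ^ L) with h | h
      · have : F e j = j * (-1) := by
          apply F_const
          intro i hi1 hi2
          exact hneg _ (Nat.log_lt_of_lt_pow (by omega) (by omega))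
        rw [this]; push_cast; omega
      · have hsplit : j = 2 ^ L - 1 + (j - (2 ^ L - 1)) := by
          have : (1:ℕ) ≤ 2 ^ L := Nat.one_le_two_pow; omega
        have h2L : (1:ℕ) ≤ 2 ^ L := Nat.one_le_two_pow
        have hble : j - (2 ^ L - 1) ≤ 2 ^ L := by
          have : j ≤ 2 ^ (L+1) - 2 := by omega
          have := Nat.pow_succ 2 L; omega
        have hF1 : F e (2 ^ L - 1) = -(2 ^ L - 1) := by
          have : F e (2 ^ L - 1) = ((2:ℕ) ^ L - 1 : ℕ) * (-1) := by
            apply F_const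
            intro i hi1 hi2
            exact hneg _ (Nat.log_lt_of_lt_pow (by omega) (by omega))
          rw [this]; push_cast [h2L]; ring
        rw [hsplit, F_block e L _ hble, hF1]
        have hcle : (j - (2 ^ L - 1) : ℕ) ≤ 2 ^ L - 1 := by
          have := Nat.pow_succ 2 L; omega
        have hc0 : (0:ℤ) ≤ ((j - (2 ^ L - 1) : ℕ) : ℤ) := Int.natCast_nonneg _
        have hcle' : ((j - (2 ^ L - 1) : ℕ) : ℤ) ≤ (2:ℤ) ^ L - 1 := by
          have : (((j - (2 ^ L - 1)) : ℕ) : ℤ) ≤ (((2 ^ L - 1 : ℕ)) : ℤ) := by exact_mod_cast hcle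
          push_cast [h2L] at this
          linarith
        have hpow : (1:ℤ) ≤ (2:ℤ) ^ L := one_le_pow₀ (by norm_num)
        rcases he L with h1 | h1 <;> rw [h1] <;> nlinarith
    omega
  · rintro ⟨i, hiL, hei⟩
    have hex : ∃ i, e i = 1 := ⟨i, hei⟩
    set K := Nat.find hex with hK
    have hKe : e K = 1 := Nat.find_spec hex
    have hKmin : ∀ i' < K, e i' = -1 := fun i' hi' =>
      (he i').resolve_left (Nat.find_min hex hi')
    have hKle : K ≤ i := Nat.find_min' hex hei
    have hKL : K < L := lt_of_le_of_lt hKle hiL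
    refine ⟨2 ^ (K + 1) - 1, ?_, ?_⟩
    · have h1 : 2 ^ (K + 1) ≤ 2 ^ L := Nat.pow_le_pow_right (by norm_num) (by omega)
      have h2 : 2 ^ L ≤ k + 1 := Nat.pow_log_le_self 2 (by omega)
      omega
    · rw [F_pow_sub_one]
      rw [Finset.sum_range_succ, hKe]
      rw [Finset.sum_congr rfl (fun i hi => by rw [hKmin i (Finset.mem_range.mp hi)])]
      simp only [mul_neg_one]
      rw [Finset.sum_neg_distrib, geom_two]
      ring



lemma F_range (e : ℕ → ℤ) (n : ℕ) : F e n = ∑ k ∈ Finset.range n, e (Nat.log 2 (k + 1)) := by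
  induction n with
  | zero => simp [F_zero]
  | succ n ih => rw [F_succ, ih, Finset.sum_range_succ]

lemma F_neg (e : ℕ → ℤ) (n : ℕ) : F (fun j => -e j) n = -F e n := by
  simp [F, Finset.sum_neg_distrib]

lemma reflect_zero_F (e : ℕ → ℤ) : reflect 0 (F e) = F (fun j => -e j) := by
  funext n
  rw [reflect]
  rw [Finset.sum_congr rfl (fun k _ => if_neg (by
    push_neg
    exact ⟨0, Nat.zero_le k, F_zero e⟩))]
  rw [Finset.sum_range_sub' (fun k => F e k) n, F_zero, F_neg]
  ring

lemma reflect_one_F (e : ℕ → ℤ) (he : ∀ i, e i = 1 ∨ e i = -1) :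
    reflect 1 (F e) = F (G e) := by
  funext n
  rw [reflect, F_range]
  refine Finset.sum_congr rfl fun k _ => ?_
  have hinc : F e (k + 1) - F e k = e (Nat.log 2 (k + 1)) := by rw [F_succ]; ring
  have hC : (∀ j ≤ k, F e j ≠ 1) ↔ ¬ ∃ i < Nat.log 2 (k + 1), e i = 1 := by
    rw [← hits_one_iff e he k]
    push_neg
    rfl
  rw [G]
  by_cases h : ∃ i < Nat.log 2 (k + 1), e i = 1
  · rw [if_pos h, if_neg (fun hc => (hC.mp hc) h)]
    rw [← hinc]; ring
  · rw [if_neg h, if_pos (hC.mpr h), hinc]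

lemma G_causal (e e' : ℕ → ℤ) (j : ℕ) (h : ∀ i ≤ j, e i = e' i) : G e j = G e' j := by
  simp only [G]
  have : (∃ i < j, e i = 1) ↔ (∃ i < j, e' i = 1) := by
    constructor <;> rintro ⟨i, hi, hh⟩ <;> refine ⟨i, hi, ?_⟩
    · rw [← h i (by omega)]; exact hh
    · rw [h i (by omega)]; exact hh
  rw [h j le_rfl]
  by_cases hh : ∃ i < j, e i = 1
  · rw [if_pos hh, if_pos (this.mp hh)]
  · rw [if_neg hh, if_neg (fun hc => hh (this.mpr hc))]

lemma G_exists_iff (e : ℕ → ℤ) (j : ℕ) : (∃ i < j, G e i = 1) ↔ (∃ i < j, e i = 1) := by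
  constructor
  · intro h
    by_contra hne
    push_neg at hne
    obtain ⟨i, hi, hGi⟩ := h
    have : G e i = e i := by
      rw [G, if_neg]
      rintro ⟨i', hi', h1⟩
      exact (hne i' (by omega)) h1
    rw [this] at hGi
    exact (hne i hi) hGi
  · rintro ⟨i, hi, hei⟩
    have hex : ∃ i, e i = 1 := ⟨i, hei⟩
    refine ⟨Nat.find hex, lt_of_le_of_lt (Nat.find_min' hex hei) hi, ?_⟩
    rw [G, if_neg]
    · exact Nat.find_spec hex
    · rintro ⟨i', hi', h1⟩
      exact Nat.find_min hex hi' h1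

lemma G_invol (e : ℕ → ℤ) : G (G e) = e := by
  funext j
  have h2 := G_exists_iff e j
  by_cases h : ∃ i < j, e i = 1
  · have ha : G (G e) j = - G e j := by
      show (if ∃ i < j, G e i = 1 then -G e j else G e j) = - G e j
      exact if_pos (h2.mpr h)
    have hb : G e j = - e j := by
      show (if ∃ i < j, e i = 1 then -e j else e j) = - e j
      exact if_pos h
    rw [ha, hb]; ring
  · have ha : G (G e) j = G e j := by
      show (if ∃ i < j, G e i = 1 then -G e j else G e j) = G e j
      exact if_neg (fun hc => h (h2.mp hc))
    have hb : G e j = e j := by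
      show (if ∃ i < j, e i = 1 then -e j else e j) = e j
      exact if_neg h
    rw [ha, hb]

lemma G_preimage (n : ℕ) (v : ℕ → ℤ) : G ⁻¹' Cyl n v = Cyl n (G v) := by
  ext e
  simp only [Set.mem_preimage, Cyl, Set.mem_setOf_eq]
  constructor
  · intro h i hi
    have : ∀ i' ≤ i, v i' = G e i' := fun i' hi' => (h i' (by omega)).symm
    rw [G_causal v (G e) i this, G_invol]
  · intro h i hi
    have : ∀ i' ≤ i, e i' = G v i' := fun i' hi' => h i' (by omega)
    rw [G_causal e (G v) i this, G_invol]

lemma neg_preimage (n : ℕ) (v : ℕ → ℤ) :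
    (fun e : ℕ → ℤ => fun j => -e j) ⁻¹' Cyl n v = Cyl n (fun i => -v i) := by
  ext e
  simp only [Set.mem_preimage, Cyl, Set.mem_setOf_eq]
  constructor <;> intro h i hi <;> have := h i hi <;> omega



lemma reflect_telescope (a : ℤ) (s : ℕ → ℤ) (n : ℕ) (hs0 : s 0 = 0)
    (h : ∀ k < n, ∀ j ≤ k, s j ≠ a) : reflect a s n = s n := by
  rw [reflect, Finset.sum_congr rfl
    (fun k hk => if_pos (h k (Finset.mem_range.mp hk))),
    Finset.sum_range_sub (fun k => s k) n, hs0, sub_zero]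

section CaseA

lemma caseA_empty (a : ℕ) (ha : 2 ≤ a) (hlog : Nat.log 2 (a + 1) = Nat.log 2 a) (e : ℕ → ℤ) :
    ¬ ((∀ n ≤ a, F e n = n) ∧ F e (a + 1) = (a : ℤ) - 1) := by
  rintro ⟨h1, h2⟩
  set L := Nat.log 2 a with hL
  have hpow : 2 ^ L ≤ a := Nat.pow_log_le_self 2 (by omega)
  have heL : e L = 1 := by
    have h2L : (1:ℕ) ≤ 2 ^ L := Nat.one_le_two_pow
    have hstep : F e (2 ^ L) = F e (2 ^ L - 1) + e L := by
      have : 2 ^ L = (2 ^ L - 1) + 1 := by omega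
      rw [this, F_succ]
      congr 2
      rw [← this, Nat.log_pow (by norm_num)]
    have ha1 := h1 (2 ^ L) hpow
    have ha2 := h1 (2 ^ L - 1) (by omega)
    rw [ha1, ha2] at hstep
    have : ((2 ^ L : ℕ) : ℤ) = ((2 ^ L - 1 : ℕ) : ℤ) + 1 := by
      push_cast [h2L]; omega
    omega
  have hfin : F e (a + 1) = F e a + e L := by
    rw [F_succ, hlog]
  rw [h1 a le_rfl, heL, h2] at hfin
  omega

lemma caseA_reflect (a : ℕ) (ha : 2 ≤ a) (hlog : Nat.log 2 (a + 1) = Nat.log 2 a)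
    (e : ℕ → ℤ) (he : ∀ i ≤ Nat.log 2 a, e i = 1) :
    (∀ n ≤ a, reflect (a : ℤ) (F e) n = n) ∧ reflect (a : ℤ) (F e) (a + 1) = (a : ℤ) - 1 := by
  set L := Nat.log 2 a with hL
  have hF : ∀ n ≤ a + 1, F e n = n := by
    intro n hn
    have : F e n = n * 1 := by
      apply F_const
      intro j hj1 hj2
      apply he
      calc Nat.log 2 j ≤ Nat.log 2 (a + 1) := Nat.log_mono_right (by omega)
        _ = L := hlog
    omega
  have hcond : ∀ k, k < a → ∀ j ≤ k, F e j ≠ (a : ℤ) := by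
    intro k hk j hj
    rw [hF j (by omega)]
    have : j < a := by omega
    exact_mod_cast Nat.ne_of_lt this
  constructor
  · intro n hn
    rw [reflect_telescope _ _ _ (F_zero e) (fun k hk => hcond k (by omega)), hF n (by omega)]
  · rw [reflect, Finset.sum_range_succ, if_neg (by
      push_neg
      exact ⟨a, le_rfl, by rw [hF a (by omega)]⟩)]
    have := reflect_telescope (a : ℤ) (F e) a (F_zero e) hcond
    rw [reflect] at this
    rw [this, hF a (by omega), hF (a + 1) le_rfl]
    push_cast
    ring
end CaseA

section CaseB

lemma caseB_F (m : ℕ) (hm : 2 ≤ m) (e : ℕ → ℤ) (he0 : e 0 = -1) (he : ∀ i, 1 ≤ i → i ≤ m → e i = 1) :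
    ∀ n, 1 ≤ n → n ≤ 2 ^ (m + 1) - 1 → F e n = (n : ℤ) - 2 := by
  intro n
  induction n with
  | zero => omega
  | succ n ih =>
    intro _ hn
    rcases Nat.eq_or_lt_of_le (show 1 ≤ n + 1 by omega) with h1 | h1
    · have : n = 0 := by omega
      subst this
      rw [F_succ, F_zero]
      simpa using he0
    · have hn1 : 1 ≤ n := by omega
      rw [F_succ, ih hn1 (by omega)]
      have hlog1 : 1 ≤ Nat.log 2 (n + 1) := by
        apply Nat.le_log_of_pow_le (by norm_num)
        omega
      have hlog2 : Nat.log 2 (n + 1) ≤ m := by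
        have : n + 1 < 2 ^ (m + 1) := by
          have : (1:ℕ) ≤ 2 ^ (m+1) := Nat.one_le_two_pow
          omega
        have := Nat.log_lt_of_lt_pow (show n + 1 ≠ 0 by omega) this
        omega
      rw [he _ hlog1 hlog2]
      push_cast
      ring

lemma caseB_empty (m : ℕ) (hm : 2 ≤ m) (a : ℕ) (hapow : a + 1 = 2 ^ m) (e : ℕ → ℤ) :
    ¬ (F e 1 = -1 ∧ (∀ n, 2 ≤ n → n ≤ a + 2 → F e n = (n : ℤ) - 2) ∧
        F e (a + 3) = (a : ℤ) - 1) := by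
  rintro ⟨h1, h2, h3⟩
  have h4 : (4:ℕ) ≤ 2 ^ m := by
    calc (4:ℕ) = 2 ^ 2 := by norm_num
    _ ≤ 2 ^ m := Nat.pow_le_pow_right (by norm_num) hm
  have hem : e m = 1 := by
    have hstep : F e (a + 1) = F e a + e m := by
      have : a + 1 = a + 1 := rfl
      rw [show a + 1 = a + 1 from rfl, F_succ]
      congr 2
      rw [hapow, Nat.log_pow (by norm_num)]
    rw [h2 (a+1) (by omega) (by omega), h2 a (by omega) (by omega)] at hstep
    push_cast at hstep
    omega
  have hstep2 : F e (a + 3) = F e (a + 2) + e m := by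
    rw [show a + 3 = (a + 2) + 1 from rfl, F_succ]
    congr 2
    apply Nat.log_eq_of_pow_le_of_lt_pow
    · omega
    · rw [pow_succ]
      omega
  rw [h2 (a+2) (by omega) (by omega), hem, h3] at hstep2
  push_cast at hstep2
  omega

lemma caseB_reflect (m : ℕ) (hm : 2 ≤ m) (a : ℕ) (hapow : a + 1 = 2 ^ m) (e : ℕ → ℤ)
    (he0 : e 0 = -1) (he : ∀ i, 1 ≤ i → i ≤ m → e i = 1) :
    reflect (a : ℤ) (F e) 1 = -1 ∧
      (∀ n, 2 ≤ n → n ≤ a + 2 → reflect (a : ℤ) (F e) n = (n : ℤ) - 2) ∧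
      reflect (a : ℤ) (F e) (a + 3) = (a : ℤ) - 1 := by
  have h4 : (4:ℕ) ≤ 2 ^ m := by
    calc (4:ℕ) = 2 ^ 2 := by norm_num
    _ ≤ 2 ^ m := Nat.pow_le_pow_right (by norm_num) hm
  have hF := caseB_F m hm e he0 he
  have hbound : a + 3 ≤ 2 ^ (m + 1) - 1 := by
    rw [pow_succ]; omega
  have hcond : ∀ k, k < a + 2 → ∀ j ≤ k, F e j ≠ (a : ℤ) := by
    intro k hk j hj
    rcases Nat.eq_zero_or_pos j with h0 | h0
    · subst h0; rw [F_zero]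
      have : (3:ℕ) ≤ a := by omega
      omega
    · rw [hF j h0 (by omega)]
      have : j ≤ a + 1 := by omega
      have : (j:ℤ) ≤ (a:ℤ) + 1 := by exact_mod_cast this
      omega
  have htel : ∀ n ≤ a + 2, reflect (a : ℤ) (F e) n = F e n := fun n hn =>
    reflect_telescope _ _ _ (F_zero e) (fun k hk => hcond k (by omega))
  refine ⟨?_, ?_, ?_⟩
  · rw [htel 1 (by omega), hF 1 le_rfl (by omega)]; norm_num
  · intro n h2n hn
    rw [htel n hn, hF n (by omega) (by omega)]
  · rw [reflect, Finset.sum_range_succ, if_neg (by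
      push_neg
      refine ⟨a + 2, le_rfl, ?_⟩
      rw [hF (a + 2) (by omega) (by omega)]
      push_cast; ring)]
    have := htel (a + 2) le_rfl
    rw [reflect] at this
    rw [this, hF (a + 2) (by omega) (by omega), hF (a + 3) (by omega) hbound]
    push_cast
    ring
end CaseB

end CE2

/-- **Counterexample 2, sharpness.** For the skip free process
`M_n = ∑_{j=1}^n ε_{⌊log₂ j⌋}` built from i.i.d. symmetric Bernoulli random variables
`(ε_k)_{k ≥ 0}`, the levels `0` and `1` are the only nonnegative integer levels at which
the reflection principle holds: for `a ∈ ℕ`, `Θ^a(M) ≐ M` if and only if `a = 0` or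
`a = 1`. -/
theorem counterexample_two_only_levels
    {Ω : Type*} [MeasurableSpace Ω] (P : Measure Ω) [IsProbabilityMeasure P]
    (ε : ℕ → Ω → ℤ) (hmeas : ∀ k, Measurable (ε k))
    (hindep : iIndepFun ε P)
    (hlaw : ∀ k, Measure.map (ε k) P = bern)
    (M : ℕ → Ω → ℤ)
    (hM : ∀ ω n, M n ω = ∑ j ∈ Finset.Icc 1 n, ε (Nat.log 2 j) ω) :
    ∀ a : ℕ,
      (Measure.map (fun ω => reflect (a : ℤ) (fun n => M n ω)) P
          = Measure.map (fun ω => (fun n => M n ω)) P)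
        ↔ (a = 0 ∨ a = 1) := by

  intro a
  have hεv : Measurable (fun ω => (ε · ω)) := CE2.measurable_epsvec ε hmeas
  set μ : Measure (ℕ → ℤ) := Measure.map (fun ω => (ε · ω)) P with hμ
  have hμprob : IsProbabilityMeasure μ := Measure.isProbabilityMeasure_map hεv.aemeasurable
  have hMvec : (fun ω => (fun n => M n ω)) = CE2.F ∘ (fun ω => (ε · ω)) := by
    funext ω
    show (fun n => M n ω) = CE2.F (ε · ω)
    funext n
    rw [hM ω n]; rfl
  have hRvec : ∀ b : ℤ, (fun ω => reflect b (fun n => M n ω)) =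
      (reflect b ∘ CE2.F) ∘ (fun ω => (ε · ω)) := by
    intro b; funext ω
    show reflect b (fun n => M n ω) = reflect b (CE2.F (ε · ω))
    rw [congrFun hMvec ω]
    rfl
  have hmapM : Measure.map (fun ω => (fun n => M n ω)) P = μ.map CE2.F := by
    rw [hMvec, hμ, Measure.map_map CE2.measurable_F hεv]
  have hmapR : ∀ b : ℤ, Measure.map (fun ω => reflect b (fun n => M n ω)) P
      = μ.map (reflect b ∘ CE2.F) := by
    intro b
    rw [hRvec b, hμ, Measure.map_map ((CE2.measurable_reflect b).comp CE2.measurable_F) hεv]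
  constructor
  · -- if equal in law then a ∈ {0, 1}
    intro heq
    by_contra hor
    push_neg at hor
    have ha : 2 ≤ a := by omega
    by_cases hpow : ∃ m, a + 1 = 2 ^ m
    · -- case B : a + 1 = 2 ^ m
      obtain ⟨m, hapow⟩ := hpow
      have hm : 2 ≤ m := by
        rcases Nat.lt_or_ge m 2 with h | h
        · interval_cases m <;> norm_num at hapow <;> omega
        · exact h
      set E : Set (ℕ → ℤ) := {s | s 1 = -1 ∧ (∀ n, 2 ≤ n → n ≤ a + 2 → s n = (n:ℤ) - 2) ∧
        s (a+3) = (a:ℤ) - 1} with hE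
      have hEmeas : MeasurableSet E := by
        have : E = ((fun s : ℕ → ℤ => s 1) ⁻¹' {(-1:ℤ)}) ∩
            ((⋂ n, ⋂ (_ : 2 ≤ n), ⋂ (_ : n ≤ a + 2),
              (fun s : ℕ → ℤ => s n) ⁻¹' {(n:ℤ) - 2}) ∩
            ((fun s : ℕ → ℤ => s (a+3)) ⁻¹' {(a:ℤ) - 1})) := by
          ext s
          simp [hE, Set.mem_iInter, and_assoc]
        rw [this]
        exact ((measurable_pi_apply 1) (measurableSet_singleton _)).inter
          (((MeasurableSet.iInter fun n => MeasurableSet.iInter fun _ =>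
            MeasurableSet.iInter fun _ =>
              (measurable_pi_apply n) (measurableSet_singleton _))).inter
            ((measurable_pi_apply (a+3)) (measurableSet_singleton _)))
      have hz : Measure.map (fun ω => (fun n => M n ω)) P E = 0 := by
        rw [hmapM, Measure.map_apply CE2.measurable_F hEmeas]
        convert measure_empty
        · ext e
          simp only [Set.mem_preimage, Set.mem_empty_iff_false, iff_false]
          intro hmem
          exact CE2.caseB_empty m hm a hapow e ⟨hmem.1, hmem.2.1, hmem.2.2⟩
        · infer_instance
      set v : ℕ → ℤ := fun i => if i = 0 then -1 else 1 with hv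
      have hsub : CE2.Cyl (m+1) v ⊆ (reflect (a:ℤ) ∘ CE2.F) ⁻¹' E := by
        intro e hmem
        have he0 : e 0 = -1 := by
          have h := hmem 0 (by omega)
          simp only [hv] at h
          simpa using h
        have he1 : ∀ i, 1 ≤ i → i ≤ m → e i = 1 := by
          intro i h1 h2
          have h := hmem i (by omega)
          simp only [hv] at h
          rwa [if_neg (by omega : ¬ i = 0)] at h
        obtain ⟨h1, h2, h3⟩ := CE2.caseB_reflect m hm a hapow e he0 he1
        exact ⟨h1, h2, h3⟩
      have hcyl : μ (CE2.Cyl (m+1) v) = (2:ℝ≥0∞)⁻¹ ^ (m+1) := by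
        rw [hμ, CE2.fdd P ε hmeas hindep hlaw]
        have : ∀ i ∈ Finset.range (m+1), bern {v i} = (2:ℝ≥0∞)⁻¹ := by
          intro i _
          rw [CE2.bern_singleton]
          have : v i = 1 ∨ v i = -1 := by by_cases h : i = 0 <;> simp [hv, h]
          rw [if_pos this]
        rw [Finset.prod_congr rfl this]
        simp
      have hval : Measure.map (fun ω => reflect (a:ℤ) (fun n => M n ω)) P E
          = μ ((reflect (a:ℤ) ∘ CE2.F) ⁻¹' E) := by
        rw [hmapR, Measure.map_apply ((CE2.measurable_reflect _).comp CE2.measurable_F) hEmeas]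
      have hge : μ ((reflect (a:ℤ) ∘ CE2.F) ⁻¹' E) ≥ (2:ℝ≥0∞)⁻¹ ^ (m+1) := by
        rw [← hcyl]
        exact measure_mono hsub
      have h0 : μ ((reflect (a:ℤ) ∘ CE2.F) ⁻¹' E) = 0 := by rw [← hval, heq, hz]
      exact (ENNReal.pow_ne_zero (by norm_num) (m+1)) (le_antisymm (h0 ▸ hge) zero_le)
    · -- case A : a + 1 not a power of two
      push_neg at hpow
      have hlog : Nat.log 2 (a+1) = Nat.log 2 a := by
        have h1 : 2 ^ Nat.log 2 a ≤ a := Nat.pow_log_le_self 2 (by omega)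
        have h2 : a < 2 ^ (Nat.log 2 a + 1) := Nat.lt_pow_succ_log_self (by norm_num) a
        have h3 : a + 1 ≠ 2 ^ (Nat.log 2 a + 1) := hpow _
        exact Nat.log_eq_of_pow_le_of_lt_pow (by omega) (by omega)
      set L := Nat.log 2 a with hL
      set E : Set (ℕ → ℤ) := {s | (∀ n ≤ a, s n = (n:ℤ)) ∧ s (a+1) = (a:ℤ) - 1} with hE
      have hEmeas : MeasurableSet E := by
        have : E = (⋂ n, ⋂ (_ : n ≤ a), (fun s : ℕ → ℤ => s n) ⁻¹' {(n:ℤ)}) ∩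
            ((fun s : ℕ → ℤ => s (a+1)) ⁻¹' {(a:ℤ) - 1}) := by
          ext s
          simp [hE, Set.mem_iInter]
        rw [this]
        exact ((MeasurableSet.iInter fun n => MeasurableSet.iInter fun _ =>
          (measurable_pi_apply n) (measurableSet_singleton _))).inter
          ((measurable_pi_apply (a+1)) (measurableSet_singleton _))
      have hz : Measure.map (fun ω => (fun n => M n ω)) P E = 0 := by
        rw [hmapM, Measure.map_apply CE2.measurable_F hEmeas]
        convert measure_empty
        · ext e
          simp only [Set.mem_preimage, Set.mem_empty_iff_false, iff_false]
          intro hmem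
          exact CE2.caseA_empty a ha hlog e ⟨hmem.1, hmem.2⟩
        · infer_instance
      have hsub : CE2.Cyl (L+1) (fun _ => 1) ⊆ (reflect (a:ℤ) ∘ CE2.F) ⁻¹' E := by
        intro e hmem
        have he : ∀ i ≤ L, e i = 1 := fun i hi => hmem i (by omega)
        obtain ⟨h1, h2⟩ := CE2.caseA_reflect a ha hlog e he
        exact ⟨h1, h2⟩
      have hcyl : μ (CE2.Cyl (L+1) (fun _ => 1)) = (2:ℝ≥0∞)⁻¹ ^ (L+1) := by
        rw [hμ, CE2.fdd P ε hmeas hindep hlaw]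
        have : ∀ i ∈ Finset.range (L+1), bern {(1:ℤ)} = (2:ℝ≥0∞)⁻¹ := by
          intro i _
          rw [CE2.bern_singleton, if_pos (Or.inl rfl)]
        rw [Finset.prod_congr rfl this]
        simp
      have hval : Measure.map (fun ω => reflect (a:ℤ) (fun n => M n ω)) P E
          = μ ((reflect (a:ℤ) ∘ CE2.F) ⁻¹' E) := by
        rw [hmapR, Measure.map_apply ((CE2.measurable_reflect _).comp CE2.measurable_F) hEmeas]
      have hge : μ ((reflect (a:ℤ) ∘ CE2.F) ⁻¹' E) ≥ (2:ℝ≥0∞)⁻¹ ^ (L+1) := by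
        rw [← hcyl]
        exact measure_mono hsub
      have h0 : μ ((reflect (a:ℤ) ∘ CE2.F) ⁻¹' E) = 0 := by rw [← hval, heq, hz]
      exact (ENNReal.pow_ne_zero (by norm_num) (L+1)) (le_antisymm (h0 ▸ hge) zero_le)
  · rintro (rfl | rfl)
    · -- a = 0
      rw [hmapR, hmapM]
      have hN : Measurable (fun e : ℕ → ℤ => fun j => -e j) :=
        measurable_pi_lambda _ fun j => (measurable_pi_apply j).neg
      have hcomp : (reflect ((0:ℕ):ℤ) ∘ CE2.F) = CE2.F ∘ (fun e : ℕ → ℤ => fun j => -e j) := by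
        funext e
        show reflect ((0:ℕ):ℤ) (CE2.F e) = CE2.F (fun j => -e j)
        rw [Nat.cast_zero]
        exact CE2.reflect_zero_F e
      rw [hcomp, ← Measure.map_map CE2.measurable_F hN]
      congr 1
      haveI : IsProbabilityMeasure (Measure.map (fun e : ℕ → ℤ => fun j => -e j) μ) :=
        Measure.isProbabilityMeasure_map hN.aemeasurable
      refine CE2.ext_of_cyl _ _ fun n v => ?_
      rw [Measure.map_apply hN (CE2.measurableSet_Cyl n v), CE2.neg_preimage,
        hμ, CE2.fdd P ε hmeas hindep hlaw, CE2.fdd P ε hmeas hindep hlaw]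
      exact Finset.prod_congr rfl fun i _ => CE2.bern_neg (v i)
    · -- a = 1
      rw [hmapR, hmapM]
      have hae : ∀ᵐ e ∂μ, ∀ i, e i = 1 ∨ e i = -1 := by
        rw [ae_all_iff]
        intro i
        have hms : MeasurableSet ({1, -1}ᶜ : Set ℤ) :=
          (by trivial : MeasurableSet ({1,-1} : Set ℤ)).compl
        have : μ {e | ¬ (e i = 1 ∨ e i = -1)} = 0 := by
          have hset : {e : ℕ → ℤ | ¬ (e i = 1 ∨ e i = -1)} =
              (fun e : ℕ → ℤ => e i) ⁻¹' ({1, -1}ᶜ : Set ℤ) := by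
            ext e; simp [Set.mem_preimage]
          rw [hset, hμ, Measure.map_apply hεv ((measurable_pi_apply i) hms)]
          have : (fun ω => (ε · ω)) ⁻¹' ((fun e : ℕ → ℤ => e i) ⁻¹' ({1, -1}ᶜ : Set ℤ))
              = ε i ⁻¹' ({1, -1}ᶜ : Set ℤ) := rfl
          rw [this, ← Measure.map_apply (hmeas i) hms, hlaw i]
          exact CE2.bern_pm_compl
        exact this
      have hcong : (reflect ((1:ℕ):ℤ) ∘ CE2.F) =ᵐ[μ] (CE2.F ∘ CE2.G) := by
        filter_upwards [hae] with e he
        show reflect ((1:ℕ):ℤ) (CE2.F e) = CE2.F (CE2.G e)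
        rw [Nat.cast_one]
        exact CE2.reflect_one_F e he
      rw [Measure.map_congr hcong, ← Measure.map_map CE2.measurable_F CE2.measurable_G]
      congr 1
      haveI : IsProbabilityMeasure (Measure.map CE2.G μ) :=
        Measure.isProbabilityMeasure_map CE2.measurable_G.aemeasurable
      refine CE2.ext_of_cyl _ _ fun n v => ?_
      rw [Measure.map_apply CE2.measurable_G (CE2.measurableSet_Cyl n v), CE2.G_preimage,
        hμ, CE2.fdd P ε hmeas hindep hlaw, CE2.fdd P ε hmeas hindep hlaw]
      refine Finset.prod_congr rfl fun i _ => ?_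
      have : CE2.G v i = if ∃ i' < i, v i' = 1 then -v i else v i := rfl
      rw [this]
      by_cases h : ∃ i' < i, v i' = 1
      · rw [if_pos h, CE2.bern_neg]
      · rw [if_neg h]
end
end

section
/- Let k ≥ 1 and λ_1, …, λ_k ∈ ℝ. For a > 0 small enough that cos(λ_j a) > 0 for all j, and for x = (x_1, …, x_k) with 0 = x_0 ≤ x_1 ≤ … ≤ x_k, define F_a(x) = ∏_{j=1}^k [cos(λ_j a)]^{(⌊a^{−2} x_j⌋ − ⌊a^{−2} x_{j−1}⌋)}. Then, as a → 0+, F_a(x) converges to exp(−(1/2) Σ_{j=1}^k λ_j² (x_j − x_{j−1})), and the convergence is uniform for x in compact subsets of {(x_1,…,x_k) ∈ ℝ_+^k : 0 ≤ x_1 ≤ … ≤ x_k}. -/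
open Filter Finset
open scoped Topology


lemma sin_div_tendsto : Tendsto (fun u : ℝ => Real.sin u / u) (𝓝[≠] (0:ℝ)) (𝓝 1) := by
  have h := hasDerivAt_iff_tendsto_slope.mp (Real.hasDerivAt_sin 0)
  simp only [Real.cos_zero] at h
  refine h.congr' ?_
  filter_upwards with u
  simp [slope_def_field, Real.sin_zero]

lemma log_div_tendsto : Tendsto (fun y : ℝ => Real.log y / (y - 1)) (𝓝[≠] (1:ℝ)) (𝓝 1) := by
  have h := hasDerivAt_iff_tendsto_slope.mp (Real.hasDerivAt_log one_ne_zero)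
  simp only [inv_one] at h
  refine h.congr' ?_
  filter_upwards with y
  simp [slope_def_field, Real.log_one]

lemma lemA (c : ℝ) :
    Tendsto (fun a : ℝ => Real.log (Real.cos (c * a)) / a ^ 2) (𝓝[>] (0:ℝ))
      (𝓝 (-(c ^ 2) / 2)) := by
  rcases eq_or_ne c 0 with rfl | hc
  · simp [tendsto_const_nhds]
  -- eventually a small
  have hδ : ∀ᶠ a in 𝓝[>] (0:ℝ), a ∈ Set.Ioo (0:ℝ) (Real.pi / |c|) := by
    have : (0:ℝ) < Real.pi / |c| := div_pos Real.pi_pos (abs_pos.mpr hc)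
    exact Ioo_mem_nhdsGT_of_mem ⟨le_refl _, this⟩
  have hcos_ne : ∀ᶠ a in 𝓝[>] (0:ℝ), Real.cos (c * a) ≠ 1 := by
    filter_upwards [hδ] with a ha
    have h1 : c * a ≠ 0 := mul_ne_zero hc (ne_of_gt ha.1)
    have h2 : |c * a| < 2 * Real.pi := by
      rw [abs_mul]
      have : |a| = a := abs_of_pos ha.1
      rw [this]
      have h3 : |c| * a < Real.pi := by
        have h4 := (lt_div_iff₀ (abs_pos.mpr hc)).mp ha.2
        linarith [mul_comm a |c| ▸ h4]
      nlinarith [Real.pi_pos]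
    intro h
    rw [Real.cos_eq_one_iff_of_lt_of_lt (by cases abs_lt.mp h2; linarith) (abs_lt.mp h2).2] at h
    exact h1 h
  
  have hcos_to : Tendsto (fun a : ℝ => Real.cos (c * a)) (𝓝[>] (0:ℝ)) (𝓝[≠] (1:ℝ)) := by
    rw [tendsto_nhdsWithin_iff]
    refine ⟨?_, hcos_ne⟩
    have h : Tendsto (fun a : ℝ => Real.cos (c * a)) (𝓝 0) (𝓝 1) := by
      have hco : Continuous (fun a : ℝ => Real.cos (c * a)) := by continuity
      have := hco.tendsto 0
      simpa using this
    exact h.mono_left nhdsWithin_le_nhds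
  have hfac1 : Tendsto (fun a : ℝ => Real.log (Real.cos (c*a)) / (Real.cos (c*a) - 1))
      (𝓝[>] (0:ℝ)) (𝓝 1) := log_div_tendsto.comp hcos_to
  have hu : Tendsto (fun a : ℝ => c * a / 2) (𝓝[>] (0:ℝ)) (𝓝[≠] (0:ℝ)) := by
    rw [tendsto_nhdsWithin_iff]
    constructor
    · have h : Tendsto (fun a : ℝ => c * a / 2) (𝓝 0) (𝓝 0) := by
        have hco : Continuous (fun a : ℝ => c * a / 2) := by continuity
        have := hco.tendsto (0:ℝ)
        simpa using this
      exact h.mono_left nhdsWithin_le_nhds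
    · filter_upwards [self_mem_nhdsWithin] with a (ha : 0 < a)
      exact div_ne_zero (mul_ne_zero hc ha.ne') two_ne_zero
  have hfac2' : Tendsto (fun a : ℝ => Real.sin (c*a/2) / (c*a/2)) (𝓝[>] (0:ℝ)) (𝓝 1) :=
    sin_div_tendsto.comp hu
  have hfac2 : Tendsto (fun a : ℝ => (Real.cos (c*a) - 1) / a ^ 2) (𝓝[>] (0:ℝ))
      (𝓝 (-(c^2)/2)) := by
    have h := (hfac2'.mul hfac2').const_mul (-(c^2)/2)
    rw [show (-(c^2)/2) * (1*1) = -(c^2)/2 by ring] at h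
    refine h.congr' ?_
    filter_upwards [self_mem_nhdsWithin] with a (ha : 0 < a)
    have hcos : Real.cos (c*a) = 1 - 2 * Real.sin (c*a/2)^2 := by
      have h2 := Real.sin_sq_eq_half_sub (c*a/2)
      rw [show 2 * (c*a/2) = c * a by ring] at h2
      linarith
    rw [hcos]
    have ha2 : a ≠ 0 := ha.ne'
    field_simp
    ring
  have h := hfac1.mul hfac2
  rw [one_mul] at h
  refine h.congr' ?_
  filter_upwards [hcos_ne, self_mem_nhdsWithin] with a hne (ha : 0 < a)
  have h1 : Real.cos (c*a) - 1 ≠ 0 := sub_ne_zero.mpr hne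
  rw [div_mul_div_comm, mul_comm (Real.log (Real.cos (c*a))) (Real.cos (c*a) - 1),
    mul_div_mul_left _ _ h1]

lemma lemB {α : Type*} (K : Set α) (p q : α → ℝ) (M : ℝ)
    (hM : ∀ x ∈ K, |q x - p x| ≤ M)
    (g : ℝ → ℝ) (c : ℝ)
    (hg : Tendsto (fun a => g a / a ^ 2) (𝓝[>] (0:ℝ)) (𝓝 c)) :
    TendstoUniformlyOn
      (fun a x => ((⌊q x / a ^ 2⌋ - ⌊p x / a ^ 2⌋ : ℤ) : ℝ) * g a)
      (fun x => c * (q x - p x)) (𝓝[>] (0:ℝ)) K := by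
  rw [Metric.tendstoUniformlyOn_iff]
  intro ε hε
  set M' : ℝ := max M 0 with hM'
  have hM'0 : 0 ≤ M' := le_max_right _ _
  set C : ℝ := |c| + 1 with hC
  have hC0 : 0 < C := by positivity
  set ε₁ : ℝ := min 1 (ε / (2 * (M' + 1))) with hε₁
  have hε₁0 : 0 < ε₁ := lt_min one_pos (by positivity)
  set ε₂ : ℝ := ε / (4 * C) with hε₂
  have hε₂0 : 0 < ε₂ := by positivity
  have h1 : ∀ᶠ a in 𝓝[>] (0:ℝ), |g a / a ^ 2 - c| < ε₁ := by
    have := hg.sub_const c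
    rw [sub_self] at this
    have h2 := this.eventually (Metric.ball_mem_nhds 0 hε₁0)
    simpa [Real.dist_eq] using h2
  have h2 : ∀ᶠ a in 𝓝[>] (0:ℝ), a ^ 2 < ε₂ := by
    have hsq : Tendsto (fun a : ℝ => a ^ 2) (𝓝[>] (0:ℝ)) (𝓝 0) := by
      have hco : Continuous (fun a : ℝ => a ^ 2) := by continuity
      have := hco.tendsto (0:ℝ)
      simp only [ne_eq, OfNat.ofNat_ne_zero, not_false_eq_true, zero_pow] at this
      exact this.mono_left nhdsWithin_le_nhds
    exact hsq.eventually_lt_const hε₂0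
  filter_upwards [h1, h2, self_mem_nhdsWithin] with a hga ha2 (ha : 0 < a)
  intro x hx
  rw [Real.dist_eq]
  have ha2pos : (0:ℝ) < a ^ 2 := by positivity
  set r : ℝ := g a / a ^ 2 with hr
  have hgeq : g a = a ^ 2 * r := by rw [hr, mul_div_assoc', mul_div_cancel_left₀ _ ha2pos.ne']
  have key : ∀ u : ℝ, |a ^ 2 * (⌊u / a ^ 2⌋ : ℝ) - u| ≤ a ^ 2 := by
    intro u
    have hfl : (⌊u / a ^ 2⌋ : ℝ) ≤ u / a ^ 2 := Int.floor_le _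
    have hfl2 : u / a ^ 2 < (⌊u / a ^ 2⌋ : ℝ) + 1 := Int.lt_floor_add_one _
    have hA := (le_div_iff₀ ha2pos).mp hfl
    have hB := (div_lt_iff₀ ha2pos).mp hfl2
    rw [abs_le]
    constructor <;> nlinarith
  set n : ℝ := ((⌊q x / a ^ 2⌋ - ⌊p x / a ^ 2⌋ : ℤ) : ℝ) with hn
  have hnval : n = (⌊q x / a ^ 2⌋ : ℝ) - (⌊p x / a ^ 2⌋ : ℝ) := by push_cast [hn]; ring
  have hfloor : |a ^ 2 * n - (q x - p x)| ≤ 2 * a ^ 2 := by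
    have h3 := key (q x)
    have h4 := key (p x)
    rw [hnval]
    have : a ^ 2 * ((⌊q x / a ^ 2⌋ : ℝ) - (⌊p x / a ^ 2⌋ : ℝ)) - (q x - p x)
        = (a ^ 2 * (⌊q x / a ^ 2⌋ : ℝ) - q x) - (a ^ 2 * (⌊p x / a ^ 2⌋ : ℝ) - p x) := by ring
    rw [this]
    calc |(a ^ 2 * (⌊q x / a ^ 2⌋ : ℝ) - q x) - (a ^ 2 * (⌊p x / a ^ 2⌋ : ℝ) - p x)|
        ≤ |a ^ 2 * (⌊q x / a ^ 2⌋ : ℝ) - q x| + |a ^ 2 * (⌊p x / a ^ 2⌋ : ℝ) - p x| :=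
          abs_sub _ _
      _ ≤ 2 * a ^ 2 := by linarith
  have hrabs : |r| ≤ C := by
    have := abs_sub_abs_le_abs_sub r c
    have hε₁1 : ε₁ ≤ 1 := min_le_left _ _
    rw [hC]
    linarith [hga]
  have hd : |q x - p x| ≤ M' := (hM x hx).trans (le_max_left _ _)
  have decomp : c * (q x - p x) - n * g a
      = -((a ^ 2 * n - (q x - p x)) * r) - (q x - p x) * (r - c) := by
    rw [hgeq]; ring
  rw [decomp]
  have hb1 : |(a ^ 2 * n - (q x - p x)) * r| ≤ 2 * a ^ 2 * C := by
    rw [abs_mul]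
    exact mul_le_mul hfloor hrabs (abs_nonneg _) (by positivity)
  have hb2 : |(q x - p x) * (r - c)| ≤ M' * ε₁ := by
    rw [abs_mul]
    exact mul_le_mul hd (le_of_lt hga) (abs_nonneg _) hM'0
  have habs : |-((a ^ 2 * n - (q x - p x)) * r) - (q x - p x) * (r - c)|
      ≤ |(a ^ 2 * n - (q x - p x)) * r| + |(q x - p x) * (r - c)| := by
    calc |-((a ^ 2 * n - (q x - p x)) * r) - (q x - p x) * (r - c)|
        = |(a ^ 2 * n - (q x - p x)) * r + (q x - p x) * (r - c)| := by
          rw [show -((a ^ 2 * n - (q x - p x)) * r) - (q x - p x) * (r - c)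
            = -((a ^ 2 * n - (q x - p x)) * r + (q x - p x) * (r - c)) by ring, abs_neg]
      _ ≤ _ := abs_add_le _ _
  have hkey1 : ε₂ * (4 * C) = ε := by rw [hε₂, div_mul_cancel₀ _ (mul_pos four_pos hC0).ne']
  have hkey2 : ε / (2 * (M' + 1)) * (2 * (M' + 1)) = ε := by
    field_simp
  have hε₁le : ε₁ ≤ ε / (2 * (M' + 1)) := min_le_right _ _
  calc |-((a ^ 2 * n - (q x - p x)) * r) - (q x - p x) * (r - c)|
      ≤ 2 * a ^ 2 * C + M' * ε₁ := by linarith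
    _ < ε := by nlinarith

lemma lemSum {α ι : Type*} (s : Finset ι) (F : ι → ℝ → α → ℝ) (G : ι → α → ℝ)
    (l : Filter ℝ) (K : Set α)
    (h : ∀ i ∈ s, TendstoUniformlyOn (fun a x => F i a x) (G i) l K) :
    TendstoUniformlyOn (fun a x => ∑ i ∈ s, F i a x) (fun x => ∑ i ∈ s, G i x) l K := by
  classical
  induction s using Finset.cons_induction with
  | empty => simpa using (tendsto_const_nhds : Tendsto (fun _ : ℝ => (0:ℝ)) l (𝓝 0)).tendstoUniformlyOn_const K
  | cons i s hi ih =>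
    simp only [Finset.sum_cons]
    exact (h i (Finset.mem_cons_self i s)).add (ih fun j hj => h j (Finset.mem_cons_of_mem hj))

lemma lemExp {α : Type*} {K : Set α} {l : Filter ℝ} {S : ℝ → α → ℝ} {L : α → ℝ} (B : ℝ)
    (hB : ∀ x ∈ K, |L x| ≤ B) (h : TendstoUniformlyOn S L l K) :
    TendstoUniformlyOn (fun a x => Real.exp (S a x)) (fun x => Real.exp (L x)) l K := by
  rw [Metric.tendstoUniformlyOn_iff] at h ⊢
  intro ε hε
  set B' : ℝ := max B 0 with hB'
  have hEB : (0:ℝ) < Real.exp B' := Real.exp_pos _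
  set ε' : ℝ := min 1 (ε / (2 * Real.exp B' + 1)) with hε'
  have hε'0 : 0 < ε' := lt_min one_pos (by positivity)
  filter_upwards [h ε' hε'0] with a ha
  intro x hx
  have hd := ha x hx
  rw [Real.dist_eq] at hd ⊢
  have hLB : L x ≤ B' := (le_abs_self _).trans ((hB x hx).trans (le_max_left _ _))
  have hsub : |S a x - L x| ≤ 1 := by
    have : |L x - S a x| < ε' := hd
    rw [abs_sub_comm] at this
    exact this.le.trans (min_le_left _ _)
  have hfact : Real.exp (L x) - Real.exp (S a x)
      = Real.exp (L x) * (1 - Real.exp (S a x - L x)) := by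
    rw [mul_sub, mul_one, ← Real.exp_add]
    ring_nf
  rw [hfact, abs_mul, abs_of_pos (Real.exp_pos _)]
  have h1 : |1 - Real.exp (S a x - L x)| ≤ 2 * |S a x - L x| := by
    rw [abs_sub_comm]
    exact Real.abs_exp_sub_one_le hsub
  have h2 : Real.exp (L x) ≤ Real.exp B' := Real.exp_le_exp.mpr hLB
  have h3 : |S a x - L x| < ε' := by rwa [abs_sub_comm]
  have hε'le : ε' ≤ ε / (2 * Real.exp B' + 1) := min_le_right _ _
  have hkey : ε / (2 * Real.exp B' + 1) * (2 * Real.exp B' + 1) = ε := by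
    field_simp
  calc Real.exp (L x) * |1 - Real.exp (S a x - L x)|
      ≤ Real.exp B' * (2 * |S a x - L x|) := by
        apply mul_le_mul h2 h1 (abs_nonneg _) hEB.le
    _ < ε := by nlinarith [abs_nonneg (S a x - L x)]

/-- **Key limit computation in the proof of Theorem 1** (equations (16)–(17)). For
`0 = x_0 ≤ x_1 ≤ … ≤ x_k`, the products
`F_a(x) = ∏_{j=1}^k cos(λ_j a)^{⌊a⁻² x_j⌋ - ⌊a⁻² x_{j-1}⌋}` converge, as `a → 0+`, to
`exp(-(1/2) ∑_{j=1}^k λ_j² (x_j - x_{j-1}))`, uniformly on compact sets. -/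
theorem cos_pow_floor_tendstoUniformlyOn
    (k : ℕ) (hk : 1 ≤ k) (lam : ℕ → ℝ)
    (K : Set (ℕ → ℝ)) (hK : IsCompact K)
    (hKsub : K ⊆ {x : ℕ → ℝ | x 0 = 0 ∧ ∀ j < k, 0 ≤ x j ∧ x j ≤ x (j + 1)}) :
    TendstoUniformlyOn
      (fun (a : ℝ) (x : ℕ → ℝ) =>
        ∏ j ∈ Finset.range k,
          Real.cos (lam (j + 1) * a) ^ (⌊x (j + 1) / a ^ 2⌋ - ⌊x j / a ^ 2⌋))
      (fun x =>
        Real.exp (-(1 / 2) * ∑ j ∈ Finset.range k, lam (j + 1) ^ 2 * (x (j + 1) - x j)))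
      (𝓝[>] (0 : ℝ)) K := by
  classical
  have hbound : ∀ j : ℕ, ∃ M : ℝ, ∀ x ∈ K, |x (j + 1) - x j| ≤ M := by
    intro j
    have hcont : Continuous (fun x : ℕ → ℝ => x (j + 1) - x j) :=
      (continuous_apply (j + 1)).sub (continuous_apply j)
    obtain ⟨M, hMb⟩ := (hK.image hcont).isBounded.exists_norm_le
    exact ⟨M, fun x hx => hMb _ ⟨x, hx, rfl⟩⟩
  choose Mf hMf using hbound
  have hsum : TendstoUniformlyOn
      (fun (a : ℝ) (x : ℕ → ℝ) => ∑ j ∈ Finset.range k,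
        ((⌊x (j + 1) / a ^ 2⌋ - ⌊x j / a ^ 2⌋ : ℤ) : ℝ) * Real.log (Real.cos (lam (j + 1) * a)))
      (fun x => ∑ j ∈ Finset.range k, (-(lam (j + 1) ^ 2) / 2) * (x (j + 1) - x j))
      (𝓝[>] (0 : ℝ)) K := by
    apply lemSum
    intro j _
    exact lemB K (fun x => x j) (fun x => x (j + 1)) (Mf j) (hMf j)
      (fun a => Real.log (Real.cos (lam (j + 1) * a))) _ (lemA (lam (j + 1)))
  have hcontL : Continuous (fun x : ℕ → ℝ =>
      ∑ j ∈ Finset.range k, (-(lam (j + 1) ^ 2) / 2) * (x (j + 1) - x j)) := by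
    apply continuous_finset_sum
    intro j _
    exact continuous_const.mul ((continuous_apply (j + 1)).sub (continuous_apply j))
  obtain ⟨B, hBb⟩ := (hK.image hcontL).isBounded.exists_norm_le
  have hB : ∀ x ∈ K,
      |∑ j ∈ Finset.range k, (-(lam (j + 1) ^ 2) / 2) * (x (j + 1) - x j)| ≤ B :=
    fun x hx => hBb _ ⟨x, hx, rfl⟩
  have hexp := lemExp B hB hsum
  have hlim_eq : (fun x : ℕ → ℝ =>
        Real.exp (∑ j ∈ Finset.range k, (-(lam (j + 1) ^ 2) / 2) * (x (j + 1) - x j)))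
      = fun x : ℕ → ℝ =>
        Real.exp (-(1 / 2) * ∑ j ∈ Finset.range k, lam (j + 1) ^ 2 * (x (j + 1) - x j)) := by
    funext x
    congr 1
    rw [Finset.mul_sum]
    exact Finset.sum_congr rfl fun j _ => by ring
  rw [← hlim_eq]
  apply hexp.congr
  have hpos : ∀ᶠ a in 𝓝[>] (0:ℝ), ∀ j ∈ Finset.range k, 0 < Real.cos (lam (j + 1) * a) := by
    rw [Finset.eventually_all]
    intro j _
    have hco : Continuous (fun a : ℝ => Real.cos (lam (j + 1) * a)) := by continuity
    have ht : Tendsto (fun a : ℝ => Real.cos (lam (j + 1) * a)) (𝓝[>] (0:ℝ)) (𝓝 1) := by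
      have := hco.tendsto 0
      simpa using this.mono_left nhdsWithin_le_nhds
    exact ht.eventually_const_lt one_pos
  filter_upwards [hpos] with a hpa
  intro x _
  simp only [Real.exp_sum]
  apply Finset.prod_congr rfl
  intro j hj
  have hc := hpa j hj
  rw [← Real.log_zpow, Real.exp_log (zpow_pos hc _)]
end
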